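/- Negative gradient of the smoothed negative log-posterior is affine plus a bounded term: for a probability measure g on [-M,M] and U_g(φ) = (1/2)(y - Xφ)ᵀΣ^{-1}(y - Xφ) - Σ_{j=1}^p log(N_τ*g)(φ_j) with Σ = σ²Id - τ²XXᵀ ≻ 0, Tweedie's formula gives ∇U_g(φ) = (XᵀΣ^{-1}X + τ^{-2}Id)φ - XᵀΣ^{-1}y - τ^{-2}θ_g(φ), where θ_g(φ) applies entrywise the posterior mean θ_g(φ_j) = E_g[θ | θ + τZ = φ_j] ∈ [-M, M]. Consequently ∇U_g is Lipschitz with constant ‖XᵀΣ^{-1}X‖_op + τ^{-2}(1 + M²/τ²), uniformly over all priors g on [-M, M]. -/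

import Mathlib

open MeasureTheory Matrix Real

/-- Density at `x` of the centered Gaussian with standard deviation `τ`. -/
noncomputable def gaussDen (τ x : ℝ) : ℝ :=
  (1 / (τ * Real.sqrt (2 * Real.pi))) * Real.exp (-x ^ 2 / (2 * τ ^ 2))

/-- Posterior mean `θ_g(φ) = E_g[θ | θ + τZ = φ]`. -/
noncomputable def postMean (g : Measure ℝ) (τ φ : ℝ) : ℝ :=
  (∫ θ, θ * gaussDen τ (φ - θ) ∂g) / (∫ θ, gaussDen τ (φ - θ) ∂g)

/-- The residual covariance `Σ = σ²Id - τ²XXᵀ`. -/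
noncomputable def SigM (n p : ℕ) (X : Matrix (Fin n) (Fin p) ℝ) (σ τ : ℝ) :
    Matrix (Fin n) (Fin n) ℝ :=
  σ ^ 2 • (1 : Matrix (Fin n) (Fin n) ℝ) - τ ^ 2 • (X * Xᵀ)

/-- The smoothed negative log-posterior
`U_g(φ) = (1/2)(y - Xφ)ᵀΣ⁻¹(y - Xφ) - ∑ⱼ log(N_τ*g)(φⱼ)`. -/
noncomputable def Ug (n p : ℕ) (X : Matrix (Fin n) (Fin p) ℝ) (σ τ : ℝ) (y : Fin n → ℝ)
    (g : Measure ℝ) (φ : Fin p → ℝ) : ℝ :=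
  (1 / 2) * ((y - X *ᵥ φ) ⬝ᵥ ((SigM n p X σ τ)⁻¹ *ᵥ (y - X *ᵥ φ)))
    - ∑ j, Real.log (∫ θ, gaussDen τ (φ j - θ) ∂g)

/-- The `j`-th component of `∇U_g(φ)` given by Tweedie's formula:
`((XᵀΣ⁻¹X + τ⁻²Id)φ - XᵀΣ⁻¹y - τ⁻²θ_g(φ))ⱼ`. -/
noncomputable def gradUg (n p : ℕ) (X : Matrix (Fin n) (Fin p) ℝ) (σ τ : ℝ) (y : Fin n → ℝ)
    (g : Measure ℝ) (φ : Fin p → ℝ) (j : Fin p) : ℝ :=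
  ((Xᵀ * (SigM n p X σ τ)⁻¹ * X) *ᵥ φ) j + φ j / τ ^ 2
    - ((Xᵀ * (SigM n p X σ τ)⁻¹) *ᵥ y) j - postMean g τ (φ j) / τ ^ 2

lemma gaussDen_pos {τ : ℝ} (hτ : 0 < τ) (x : ℝ) : 0 < gaussDen τ x := by
  unfold gaussDen
  positivity

lemma gaussDen_le {τ : ℝ} (hτ : 0 < τ) (x : ℝ) :
    gaussDen τ x ≤ 1 / (τ * Real.sqrt (2 * Real.pi)) := by
  unfold gaussDen
  have h1 : Real.exp (-x ^ 2 / (2 * τ ^ 2)) ≤ 1 := by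
    rw [Real.exp_le_one_iff]
    have : (0:ℝ) < 2 * τ ^ 2 := by positivity
    rw [div_nonpos_iff]
    right; constructor <;> nlinarith [sq_nonneg x]
  have h2 : (0:ℝ) < 1 / (τ * Real.sqrt (2 * Real.pi)) := by positivity
  calc (1 / (τ * Real.sqrt (2 * Real.pi))) * Real.exp (-x ^ 2 / (2 * τ ^ 2))
      ≤ (1 / (τ * Real.sqrt (2 * Real.pi))) * 1 := by
        exact mul_le_mul_of_nonneg_left h1 h2.le
    _ = _ := mul_one _

lemma hasDerivAt_gaussDen {τ : ℝ} (hτ : 0 < τ) (x : ℝ) :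
    HasDerivAt (gaussDen τ) (-(x / τ ^ 2) * gaussDen τ x) x := by
  have h1 : HasDerivAt (fun x : ℝ => -x ^ 2 / (2 * τ ^ 2)) (-(x / τ ^ 2)) x := by
    have := ((hasDerivAt_pow 2 x).neg).div_const (2 * τ ^ 2)
    refine this.congr_deriv ?_
    field_simp
    ring
  have h2 := (h1.exp).const_mul (1 / (τ * Real.sqrt (2 * Real.pi)))
  exact h2.congr_deriv (by unfold gaussDen; ring)

lemma abs_mul_gaussDen_le {τ : ℝ} (hτ : 0 < τ) (x : ℝ) :
    |x| * gaussDen τ x ≤ τ * (1 / (τ * Real.sqrt (2 * Real.pi))) := by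
  have key : |x| * Real.exp (-x ^ 2 / (2 * τ ^ 2)) ≤ τ := by
    have h1 : |x| ≤ τ * Real.exp (x ^ 2 / (2 * τ ^ 2)) := by
      have ht : |x| / τ ≤ 1 + (|x| / τ) ^ 2 / 2 := by nlinarith [sq_nonneg (|x|/τ - 1)]
      have he : 1 + (|x| / τ) ^ 2 / 2 ≤ Real.exp ((|x| / τ) ^ 2 / 2) := by
        have := Real.add_one_le_exp ((|x| / τ) ^ 2 / 2); linarith
      have h3 : |x| / τ ≤ Real.exp ((|x| / τ) ^ 2 / 2) := ht.trans he
      have h2 : (|x| / τ) ^ 2 / 2 = x ^ 2 / (2 * τ ^ 2) := by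
        rw [div_pow, sq_abs]; ring
      rw [h2] at h3
      calc |x| = τ * (|x| / τ) := by field_simp
        _ ≤ τ * Real.exp (x ^ 2 / (2 * τ ^ 2)) := mul_le_mul_of_nonneg_left h3 hτ.le
    calc |x| * Real.exp (-x ^ 2 / (2 * τ ^ 2))
        ≤ (τ * Real.exp (x ^ 2 / (2 * τ ^ 2))) * Real.exp (-x ^ 2 / (2 * τ ^ 2)) :=
          mul_le_mul_of_nonneg_right h1 (Real.exp_pos _).le
      _ = τ * Real.exp (x ^ 2 / (2 * τ ^ 2) + -x ^ 2 / (2 * τ ^ 2)) := by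
          rw [mul_assoc, Real.exp_add]
      _ = τ := by rw [show x ^ 2 / (2 * τ ^ 2) + -x ^ 2 / (2 * τ ^ 2) = 0 by ring, Real.exp_zero, mul_one]
  unfold gaussDen
  have hc : (0:ℝ) < 1 / (τ * Real.sqrt (2 * Real.pi)) := by positivity
  calc |x| * ((1 / (τ * Real.sqrt (2 * Real.pi))) * Real.exp (-x ^ 2 / (2 * τ ^ 2)))
      = (|x| * Real.exp (-x ^ 2 / (2 * τ ^ 2))) * (1 / (τ * Real.sqrt (2 * Real.pi))) := by ring
    _ ≤ τ * (1 / (τ * Real.sqrt (2 * Real.pi))) := mul_le_mul_of_nonneg_right key hc.le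

lemma continuous_gaussDen (τ : ℝ) : Continuous (gaussDen τ) := by
  unfold gaussDen
  fun_prop

section Meas
variable {M τ : ℝ} {g : Measure ℝ} [IsProbabilityMeasure g]

lemma ae_abs_le (hg : g (Set.Icc (-M) M) = 1) : ∀ᵐ θ ∂g, |θ| ≤ M := by
  have h1 : g (Set.Icc (-M) M)ᶜ = 0 := by
    rw [measure_compl measurableSet_Icc (by simp [hg])]
    simp [hg]
  refine ae_iff.2 (measure_mono_null (fun θ hθ => ?_) h1)
  simp only [Set.mem_setOf_eq] at hθ
  simpa [Set.mem_compl_iff, Set.mem_Icc, ← abs_le] using hθ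
end Meas


lemma gaussDen_mono {τ x z : ℝ} (hτ : 0 < τ) (h : x ^ 2 ≤ z ^ 2) :
    gaussDen τ z ≤ gaussDen τ x := by
  unfold gaussDen
  have h2 : (0:ℝ) < 2 * τ ^ 2 := by positivity
  have : -z ^ 2 / (2 * τ ^ 2) ≤ -x ^ 2 / (2 * τ ^ 2) := by
    apply div_le_div_of_nonneg_right (by linarith) h2.le
  exact mul_le_mul_of_nonneg_left (Real.exp_le_exp.2 this) (by positivity)

section Meas2
variable {M τ : ℝ} {g : Measure ℝ} [IsProbabilityMeasure g]

omit [IsProbabilityMeasure g] in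
lemma aesm_gauss (τ s : ℝ) : AEStronglyMeasurable (fun θ => gaussDen τ (s - θ)) g :=
  ((continuous_gaussDen τ).comp (continuous_const.sub continuous_id)).aestronglyMeasurable

lemma integrable_gauss (hτ : 0 < τ) (s : ℝ) :
    Integrable (fun θ => gaussDen τ (s - θ)) g := by
  refine Integrable.mono' (integrable_const (1 / (τ * Real.sqrt (2 * Real.pi))))
    (aesm_gauss τ s) ?_
  filter_upwards with θ
  rw [Real.norm_eq_abs, abs_of_pos (gaussDen_pos hτ _)]
  exact gaussDen_le hτ _

lemma integrable_theta_gauss (hτ : 0 < τ) (hg : g (Set.Icc (-M) M) = 1) (s : ℝ) :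
    Integrable (fun θ => θ * gaussDen τ (s - θ)) g := by
  refine Integrable.mono' (integrable_const (M * (1 / (τ * Real.sqrt (2 * Real.pi)))))
    ((continuous_id.mul ((continuous_gaussDen τ).comp
      (continuous_const.sub continuous_id))).aestronglyMeasurable) ?_
  filter_upwards [ae_abs_le hg] with θ hθ
  rw [Real.norm_eq_abs, abs_mul, abs_of_pos (gaussDen_pos hτ _)]
  exact mul_le_mul hθ (gaussDen_le hτ _) (gaussDen_pos hτ _).le
    ((abs_nonneg θ).trans hθ)

lemma integrable_sq_gauss (hτ : 0 < τ) (hg : g (Set.Icc (-M) M) = 1) (s : ℝ) :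
    Integrable (fun θ => θ ^ 2 * gaussDen τ (s - θ)) g := by
  refine Integrable.mono' (integrable_const (M ^ 2 * (1 / (τ * Real.sqrt (2 * Real.pi)))))
    (((continuous_pow 2).mul ((continuous_gaussDen τ).comp
      (continuous_const.sub continuous_id))).aestronglyMeasurable) ?_
  filter_upwards [ae_abs_le hg] with θ hθ
  rw [Real.norm_eq_abs, abs_mul, abs_pow, sq_abs]
  have h1 : θ ^ 2 ≤ M ^ 2 := by nlinarith [abs_nonneg θ, le_abs_self θ, neg_abs_le θ]
  rw [abs_of_pos (gaussDen_pos hτ _)]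
  exact mul_le_mul h1 (gaussDen_le hτ _) (gaussDen_pos hτ _).le (by nlinarith [abs_nonneg θ])

lemma D_pos (hτ : 0 < τ) (hg : g (Set.Icc (-M) M) = 1) (s : ℝ) :
    0 < ∫ θ, gaussDen τ (s - θ) ∂g := by
  have hc : 0 < gaussDen τ (|s| + M) := gaussDen_pos hτ _
  have hb : ∀ᵐ θ ∂g, gaussDen τ (|s| + M) ≤ gaussDen τ (s - θ) := by
    filter_upwards [ae_abs_le hg] with θ hθ
    refine gaussDen_mono hτ ?_
    have h1 : |s - θ| ≤ |s| + M := (abs_sub s θ).trans (by linarith)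
    calc (s - θ) ^ 2 = |s - θ| ^ 2 := (sq_abs _).symm
      _ ≤ (|s| + M) ^ 2 := by nlinarith [abs_nonneg (s - θ), abs_nonneg s]
  calc (0:ℝ) < gaussDen τ (|s| + M) := hc
    _ = ∫ _θ, gaussDen τ (|s| + M) ∂g := by simp
    _ ≤ ∫ θ, gaussDen τ (s - θ) ∂g :=
        integral_mono_ae (integrable_const _) (integrable_gauss hτ s) hb
end Meas2

section Deriv
variable {M τ : ℝ} {g : Measure ℝ} [IsProbabilityMeasure g]

lemma hasDerivAt_gauss_shift {τ : ℝ} (hτ : 0 < τ) (θ x : ℝ) :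
    HasDerivAt (fun x => gaussDen τ (x - θ)) (-((x - θ) / τ ^ 2) * gaussDen τ (x - θ)) x := by
  have h := (hasDerivAt_gaussDen hτ (x - θ)).comp x ((hasDerivAt_id x).sub_const θ)
  exact h.congr_deriv (by ring)

lemma norm_F'_eq {τ : ℝ} (hτ : 0 < τ) (x θ : ℝ) :
    ‖-((x - θ) / τ ^ 2) * gaussDen τ (x - θ)‖ = |x - θ| * gaussDen τ (x - θ) / τ ^ 2 := by
  rw [Real.norm_eq_abs, abs_mul, abs_neg, abs_div,
    abs_of_pos (show (0:ℝ) < τ ^ 2 by positivity), abs_of_pos (gaussDen_pos hτ _),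
    div_mul_eq_mul_div]

lemma F'_le {τ : ℝ} (hτ : 0 < τ) (x θ : ℝ) :
    ‖-((x - θ) / τ ^ 2) * gaussDen τ (x - θ)‖ ≤ τ * (1 / (τ * Real.sqrt (2 * Real.pi))) / τ ^ 2 := by
  rw [norm_F'_eq hτ]
  exact div_le_div_of_nonneg_right (abs_mul_gaussDen_le hτ _) (by positivity : (0:ℝ) ≤ τ ^ 2)

set_option maxHeartbeats 1000000 in
lemma hasDerivAt_D (hτ : 0 < τ) (hg : g (Set.Icc (-M) M) = 1) (s : ℝ) :
    HasDerivAt (fun x => ∫ θ, gaussDen τ (x - θ) ∂g)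
      ((∫ θ, θ * gaussDen τ (s - θ) ∂g - s * ∫ θ, gaussDen τ (s - θ) ∂g) / τ ^ 2) s := by
  have hc : Continuous fun θ : ℝ => -((s - θ) / τ ^ 2) * gaussDen τ (s - θ) := by
    unfold gaussDen; fun_prop
  have key := hasDerivAt_integral_of_dominated_loc_of_deriv_le (μ := g) (x₀ := s)
    (F := fun x θ => gaussDen τ (x - θ))
    (F' := fun x θ => -((x - θ) / τ ^ 2) * gaussDen τ (x - θ))
    (bound := fun _ => τ * (1 / (τ * Real.sqrt (2 * Real.pi))) / τ ^ 2)
    (Metric.ball_mem_nhds s one_pos)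
    (Filter.Eventually.of_forall fun x => aesm_gauss τ x)
    (integrable_gauss hτ s)
    hc.aestronglyMeasurable
    (Filter.Eventually.of_forall fun θ x _ => F'_le hτ x θ)
    (integrable_const _)
    (Filter.Eventually.of_forall fun θ x _ => hasDerivAt_gauss_shift hτ θ x)
  have h2 := key.2
  have heq : (∫ θ, -((s - θ) / τ ^ 2) * gaussDen τ (s - θ) ∂g)
      = (∫ θ, θ * gaussDen τ (s - θ) ∂g - s * ∫ θ, gaussDen τ (s - θ) ∂g) / τ ^ 2 := by
    have he : (fun θ => -((s - θ) / τ ^ 2) * gaussDen τ (s - θ))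
        = fun θ => (θ * gaussDen τ (s - θ) - s * gaussDen τ (s - θ)) / τ ^ 2 := by
      funext θ; ring
    rw [he, integral_div, integral_sub (integrable_theta_gauss hτ hg s)
      ((integrable_gauss hτ s).const_mul s), integral_const_mul]
  rwa [heq] at h2

set_option maxHeartbeats 1000000 in
lemma hasDerivAt_N (hτ : 0 < τ) (hM : 0 < M) (hg : g (Set.Icc (-M) M) = 1) (s : ℝ) :
    HasDerivAt (fun x => ∫ θ, θ * gaussDen τ (x - θ) ∂g)
      ((∫ θ, θ ^ 2 * gaussDen τ (s - θ) ∂g - s * ∫ θ, θ * gaussDen τ (s - θ) ∂g) / τ ^ 2) s := by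
  have hc : Continuous fun θ : ℝ => θ * (-((s - θ) / τ ^ 2) * gaussDen τ (s - θ)) := by
    unfold gaussDen; fun_prop
  have hc2 : ∀ x : ℝ, Continuous fun θ : ℝ => θ * gaussDen τ (x - θ) := by
    intro x; unfold gaussDen; fun_prop
  have hbd : ∀ᵐ θ ∂g, ∀ x ∈ Metric.ball s 1,
      ‖θ * (-((x - θ) / τ ^ 2) * gaussDen τ (x - θ))‖
        ≤ M * (τ * (1 / (τ * Real.sqrt (2 * Real.pi))) / τ ^ 2) := by
    filter_upwards [ae_abs_le hg] with θ hθ x _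
    rw [norm_mul, Real.norm_eq_abs]
    exact mul_le_mul hθ (F'_le hτ x θ) (norm_nonneg _) hM.le
  have key := hasDerivAt_integral_of_dominated_loc_of_deriv_le (μ := g) (x₀ := s)
    (F := fun x θ => θ * gaussDen τ (x - θ))
    (F' := fun x θ => θ * (-((x - θ) / τ ^ 2) * gaussDen τ (x - θ)))
    (bound := fun _ => M * (τ * (1 / (τ * Real.sqrt (2 * Real.pi))) / τ ^ 2))
    (Metric.ball_mem_nhds s one_pos)
    (Filter.Eventually.of_forall fun x => (hc2 x).aestronglyMeasurable)
    (integrable_theta_gauss hτ hg s)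
    hc.aestronglyMeasurable
    hbd
    (integrable_const _)
    (Filter.Eventually.of_forall fun θ x _ => (hasDerivAt_gauss_shift hτ θ x).const_mul θ)
  have h2 := key.2
  have heq : (∫ θ, θ * (-((s - θ) / τ ^ 2) * gaussDen τ (s - θ)) ∂g)
      = (∫ θ, θ ^ 2 * gaussDen τ (s - θ) ∂g - s * ∫ θ, θ * gaussDen τ (s - θ) ∂g) / τ ^ 2 := by
    have he : (fun θ => θ * (-((s - θ) / τ ^ 2) * gaussDen τ (s - θ)))
        = fun θ => (θ ^ 2 * gaussDen τ (s - θ) - s * (θ * gaussDen τ (s - θ))) / τ ^ 2 := by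
      funext θ; ring
    rw [he, integral_div, integral_sub (integrable_sq_gauss hτ hg s)
      ((integrable_theta_gauss hτ hg s).const_mul s), integral_const_mul]
  rwa [heq] at h2

lemma hasDerivAt_postMean (hτ : 0 < τ) (hM : 0 < M) (hg : g (Set.Icc (-M) M) = 1) (s : ℝ) :
    HasDerivAt (postMean g τ)
      (((∫ θ, θ ^ 2 * gaussDen τ (s - θ) ∂g) * (∫ θ, gaussDen τ (s - θ) ∂g)
          - (∫ θ, θ * gaussDen τ (s - θ) ∂g) ^ 2)
        / (τ ^ 2 * (∫ θ, gaussDen τ (s - θ) ∂g) ^ 2)) s := by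
  have hD := D_pos hτ hg s
  have h := (hasDerivAt_N hτ hM hg s).div (hasDerivAt_D hτ hg s) hD.ne'
  have heq : postMean g τ = fun x =>
      (∫ θ, θ * gaussDen τ (x - θ) ∂g) / (∫ θ, gaussDen τ (x - θ) ∂g) := rfl
  rw [heq]
  refine h.congr_deriv ?_
  set D := ∫ θ, gaussDen τ (s - θ) ∂g
  set N := ∫ θ, θ * gaussDen τ (s - θ) ∂g
  set E2 := ∫ θ, θ ^ 2 * gaussDen τ (s - θ) ∂g
  field_simp
  ring

lemma abs_postMean_deriv_le (hτ : 0 < τ) (hM : 0 < M) (hg : g (Set.Icc (-M) M) = 1) (s : ℝ) :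
    |((∫ θ, θ ^ 2 * gaussDen τ (s - θ) ∂g) * (∫ θ, gaussDen τ (s - θ) ∂g)
          - (∫ θ, θ * gaussDen τ (s - θ) ∂g) ^ 2)
        / (τ ^ 2 * (∫ θ, gaussDen τ (s - θ) ∂g) ^ 2)| ≤ M ^ 2 / τ ^ 2 := by
  have hD := D_pos hτ hg s
  set D := ∫ θ, gaussDen τ (s - θ) ∂g
  set N := ∫ θ, θ * gaussDen τ (s - θ) ∂g
  set E2 := ∫ θ, θ ^ 2 * gaussDen τ (s - θ) ∂g
  have hE2nn : 0 ≤ E2 := integral_nonneg fun θ => mul_nonneg (sq_nonneg θ) (gaussDen_pos hτ _).le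
  have hE2le : E2 ≤ M ^ 2 * D := by
    rw [← integral_const_mul]
    refine integral_mono_ae (integrable_sq_gauss hτ hg s)
      ((integrable_gauss hτ s).const_mul _) ?_
    filter_upwards [ae_abs_le hg] with θ hθ
    have h1 : θ ^ 2 ≤ M ^ 2 := by nlinarith [abs_nonneg θ, le_abs_self θ, neg_abs_le θ]
    exact mul_le_mul_of_nonneg_right h1 (gaussDen_pos hτ _).le
  have hNle : |N| ≤ M * D := by
    calc |N| ≤ ∫ θ, |θ * gaussDen τ (s - θ)| ∂g := by
          have := norm_integral_le_integral_norm (μ := g) (fun θ => θ * gaussDen τ (s - θ))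
          simpa only [Real.norm_eq_abs] using this
      _ ≤ ∫ θ, M * gaussDen τ (s - θ) ∂g := by
          refine integral_mono_ae (integrable_theta_gauss hτ hg s).abs
            ((integrable_gauss hτ s).const_mul _) ?_
          filter_upwards [ae_abs_le hg] with θ hθ
          rw [abs_mul, abs_of_pos (gaussDen_pos hτ _)]
          exact mul_le_mul_of_nonneg_right hθ (gaussDen_pos hτ _).le
      _ = M * D := integral_const_mul _ _
  have hdenom : 0 < τ ^ 2 * D ^ 2 := by positivity
  rw [abs_div, abs_of_pos hdenom, div_le_div_iff₀ hdenom (by positivity : (0:ℝ) < τ ^ 2)]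
  have hN2 : N ^ 2 ≤ M ^ 2 * D ^ 2 := by
    have := sq_le_sq' (neg_abs_le N) (le_abs_self N)
    calc N ^ 2 ≤ |N| ^ 2 := by rw [sq_abs]
      _ ≤ (M * D) ^ 2 := by nlinarith [abs_nonneg N]
      _ = M ^ 2 * D ^ 2 := by ring
  have habs : |E2 * D - N ^ 2| ≤ M ^ 2 * D ^ 2 := by
    rw [abs_le]
    constructor
    · nlinarith [sq_nonneg N]
    · nlinarith [sq_nonneg N]
  nlinarith [habs, sq_nonneg D, hdenom]

lemma postMean_lipschitz (hτ : 0 < τ) (hM : 0 < M) (hg : g (Set.Icc (-M) M) = 1) (a b : ℝ) :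
    |postMean g τ a - postMean g τ b| ≤ M ^ 2 / τ ^ 2 * |a - b| := by
  have h := Convex.norm_image_sub_le_of_norm_hasDerivWithin_le
    (f := postMean g τ)
    (f' := fun s => ((∫ θ, θ ^ 2 * gaussDen τ (s - θ) ∂g) * (∫ θ, gaussDen τ (s - θ) ∂g)
          - (∫ θ, θ * gaussDen τ (s - θ) ∂g) ^ 2)
        / (τ ^ 2 * (∫ θ, gaussDen τ (s - θ) ∂g) ^ 2))
    (C := M ^ 2 / τ ^ 2) (s := Set.univ)
    (fun x _ => (hasDerivAt_postMean hτ hM hg x).hasDerivWithinAt)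
    (fun x _ => by rw [Real.norm_eq_abs]; exact abs_postMean_deriv_le hτ hM hg x)
    convex_univ (Set.mem_univ b) (Set.mem_univ a)
  simpa [Real.norm_eq_abs] using h
end Deriv

lemma hasDerivAt_mulVec_update {n p : ℕ} (X : Matrix (Fin n) (Fin p) ℝ)
    (φ : Fin p → ℝ) (j : Fin p) (i : Fin n) (s₀ : ℝ) :
    HasDerivAt (fun s => (X *ᵥ Function.update φ j s) i) (X i j) s₀ := by
  have he : (fun s => (X *ᵥ Function.update φ j s) i)
      = fun s => ∑ k, X i k * Function.update φ j s k := by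
    funext s; simp [Matrix.mulVec, dotProduct]
  rw [he]
  have hsum : HasDerivAt (fun s => ∑ k, X i k * Function.update φ j s k)
      (∑ k, if k = j then X i j else 0) s₀ := by
    apply HasDerivAt.fun_sum
    intro k _
    by_cases hk : k = j
    · subst hk
      simp only [if_pos rfl]
      have : (fun s => X i k * Function.update φ k s k) = fun s => X i k * s := by
        funext s; rw [Function.update_self]
      rw [this]
      simpa using (hasDerivAt_id s₀).const_mul (X i k)
    · simp only [if_neg hk]
      have : (fun s => X i k * Function.update φ j s k) = fun _ => X i k * φ k := by
        funext s; rw [Function.update_of_ne hk]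
      rw [this]
      exact hasDerivAt_const _ _
  simpa using hsum

lemma part1 (n p : ℕ) (X : Matrix (Fin n) (Fin p) ℝ) (σ τ M : ℝ)
    (hτ : 0 < τ) (hM : 0 < M) (y : Fin n → ℝ)
    (g : Measure ℝ) [IsProbabilityMeasure g] (hg : g (Set.Icc (-M) M) = 1)
    (φ : Fin p → ℝ) (j : Fin p) :
    HasDerivAt (fun s => Ug n p X σ τ y g (Function.update φ j s))
      (gradUg n p X σ τ y g φ j) (φ j) := by
  set A := (SigM n p X σ τ)⁻¹ with hA
  -- symmetry of A
  have hS : (SigM n p X σ τ)ᵀ = SigM n p X σ τ := by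
    unfold SigM
    simp [Matrix.transpose_sub, Matrix.transpose_smul, Matrix.transpose_mul,
      Matrix.transpose_one, Matrix.transpose_transpose]
  have hAsymm : Aᵀ = A := by rw [hA, Matrix.transpose_nonsing_inv, hS]
  have hA' : ∀ i k, A k i = A i k := fun i k => by
    have := congrFun (congrFun hAsymm i) k
    simpa [Matrix.transpose_apply] using this
  -- notation
  set r : Fin n → ℝ := fun k => y k - (X *ᵥ φ) k with hr
  set w : Fin n → ℝ := fun i => ∑ k, A i k * r k with hw
  -- derivative of residual components
  have hres : ∀ (i : Fin n) (s₀ : ℝ),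
      HasDerivAt (fun s => y i - (X *ᵥ Function.update φ j s) i) (-(X i j)) s₀ := by
    intro i s₀
    simpa using (hasDerivAt_mulVec_update X φ j i s₀).const_sub (y i)
  -- quadratic part
  have hupdate_self : Function.update φ j (φ j) = φ := Function.update_eq_self j φ
  have hq : HasDerivAt (fun s => (1/2 : ℝ) * ∑ i, (y i - (X *ᵥ Function.update φ j s) i)
        * ∑ k, A i k * (y k - (X *ᵥ Function.update φ j s) k))
      ((1/2 : ℝ) * ∑ i, ((-(X i j)) * w i + r i * ∑ k, A i k * (-(X k j)))) (φ j) := by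
    refine HasDerivAt.const_mul _ (HasDerivAt.fun_sum fun i _ => ?_)
    have h1 := hres i (φ j)
    have h2 : HasDerivAt (fun s => ∑ k, A i k * (y k - (X *ᵥ Function.update φ j s) k))
        (∑ k, A i k * (-(X k j))) (φ j) :=
      HasDerivAt.fun_sum fun k _ => (hres k (φ j)).const_mul (A i k)
    have := h1.mul h2
    simp only [hupdate_self] at this
    exact this.congr_deriv rfl
  -- identify quadratic derivative
  have hdq : (1/2 : ℝ) * ∑ i, ((-(X i j)) * w i + r i * ∑ k, A i k * (-(X k j)))
      = ((Xᵀ * A * X) *ᵥ φ) j - ((Xᵀ * A) *ᵥ y) j := by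
    have claim1 : ∑ i, r i * ∑ k, A i k * (-(X k j)) = ∑ i, (-(X i j)) * w i := by
      calc ∑ i, r i * ∑ k, A i k * (-(X k j))
          = ∑ i, ∑ k, -(X k j) * (A i k * r i) := by
            refine Finset.sum_congr rfl fun i _ => ?_
            rw [Finset.mul_sum]
            exact Finset.sum_congr rfl fun k _ => by ring
        _ = ∑ k, ∑ i, -(X k j) * (A i k * r i) := Finset.sum_comm
        _ = ∑ k, -(X k j) * ∑ i, A k i * r i := by
            refine Finset.sum_congr rfl fun k _ => ?_
            rw [Finset.mul_sum]
            exact Finset.sum_congr rfl fun i _ => by rw [hA' i k]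
        _ = ∑ i, (-(X i j)) * w i := by
            exact Finset.sum_congr rfl fun k _ => by rw [hw]
    have hXt : ∑ i, (-(X i j)) * w i = -(((Xᵀ * A) *ᵥ r) j) := by
      rw [← Matrix.mulVec_mulVec]
      simp only [Matrix.mulVec, dotProduct, Matrix.transpose_apply]
      rw [← Finset.sum_neg_distrib]
      refine Finset.sum_congr rfl fun i _ => ?_
      rw [hw]
      simp [Matrix.mulVec, dotProduct]
    have hrsub : ((Xᵀ * A) *ᵥ r) j = ((Xᵀ * A) *ᵥ y) j - ((Xᵀ * A * X) *ᵥ φ) j := by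
      have : r = y - X *ᵥ φ := by funext k; simp [hr]
      rw [this, Matrix.mulVec_sub, Matrix.mulVec_mulVec]
      simp
    rw [Finset.sum_add_distrib, claim1, ← two_mul]
    rw [hXt, hrsub]
    ring
  -- log part
  have hDp := D_pos hτ hg (φ j)
  have hlog : HasDerivAt (fun s => ∑ k, Real.log (∫ θ, gaussDen τ
        (Function.update φ j s k - θ) ∂g))
      ((postMean g τ (φ j) - φ j) / τ ^ 2) (φ j) := by
    have hsum : HasDerivAt (fun s => ∑ k, Real.log (∫ θ, gaussDen τ
          (Function.update φ j s k - θ) ∂g))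
        (∑ k, if k = j then (postMean g τ (φ j) - φ j) / τ ^ 2 else 0) (φ j) := by
      apply HasDerivAt.fun_sum
      intro k _
      by_cases hk : k = j
      · subst hk
        simp only [if_pos rfl]
        have he : (fun s => Real.log (∫ θ, gaussDen τ (Function.update φ k s k - θ) ∂g))
            = fun s => Real.log (∫ θ, gaussDen τ (s - θ) ∂g) := by
          funext s; rw [Function.update_self]
        rw [he]
        have hld := (hasDerivAt_D hτ hg (φ k)).log (D_pos hτ hg (φ k)).ne'
        refine hld.congr_deriv ?_
        unfold postMean
        rw [if_pos trivial]
        have hD := (D_pos hτ hg (φ k)).ne'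
        generalize (∫ θ, gaussDen τ (φ k - θ) ∂g) = D at hD ⊢
        generalize (∫ θ, θ * gaussDen τ (φ k - θ) ∂g) = N
        rw [div_right_comm, sub_div N (φ k * D) D, mul_div_assoc, div_self hD, mul_one]
      · simp only [if_neg hk]
        have he : (fun s => Real.log (∫ θ, gaussDen τ (Function.update φ j s k - θ) ∂g))
            = fun _ => Real.log (∫ θ, gaussDen τ (φ k - θ) ∂g) := by
          funext s; rw [Function.update_of_ne hk]
        rw [he]
        exact hasDerivAt_const _ _
    simpa using hsum
  -- assemble
  have hUeq : (fun s => Ug n p X σ τ y g (Function.update φ j s))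
      = fun s => ((1/2 : ℝ) * ∑ i, (y i - (X *ᵥ Function.update φ j s) i)
        * ∑ k, A i k * (y k - (X *ᵥ Function.update φ j s) k))
        - ∑ k, Real.log (∫ θ, gaussDen τ (Function.update φ j s k - θ) ∂g) := by
    funext s
    unfold Ug
    congr 1
  rw [hUeq]
  have := hq.sub hlog
  refine this.congr_deriv ?_
  rw [hdq]
  unfold gradUg
  rw [← hA]
  ring

noncomputable def euc {p : ℕ} (w : Fin p → ℝ) : EuclideanSpace ℝ (Fin p) :=
  (WithLp.equiv 2 (Fin p → ℝ)).symm w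

lemma euc_norm {p : ℕ} (w : Fin p → ℝ) :
    ‖euc w‖ = Real.sqrt (∑ j, w j ^ 2) := by
  rw [EuclideanSpace.norm_eq]
  congr 1
  refine Finset.sum_congr rfl fun j _ => ?_
  rw [Real.norm_eq_abs, sq_abs]
  rfl

lemma sqrt_sum_sq_le {p : ℕ} (a b : Fin p → ℝ) (h : ∀ j, |a j| ≤ |b j|) :
    Real.sqrt (∑ j, a j ^ 2) ≤ Real.sqrt (∑ j, b j ^ 2) := by
  apply Real.sqrt_le_sqrt
  refine Finset.sum_le_sum fun j _ => ?_
  calc a j ^ 2 = |a j| ^ 2 := (sq_abs _).symm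
    _ ≤ |b j| ^ 2 := by nlinarith [abs_nonneg (a j), abs_nonneg (b j), h j]
    _ = b j ^ 2 := sq_abs _

lemma mulVec_norm_le {p : ℕ} (B : Matrix (Fin p) (Fin p) ℝ) (v : Fin p → ℝ) :
    ‖euc (B *ᵥ v)‖ ≤ ‖Matrix.toEuclideanCLM (𝕜 := ℝ) B‖ * ‖euc v‖ := by
  have h : euc (B *ᵥ v) = Matrix.toEuclideanCLM (𝕜 := ℝ) B (euc v) := by
    simp only [euc, WithLp.equiv_symm_apply, Matrix.toEuclideanCLM_toLp]
  rw [h]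
  exact (Matrix.toEuclideanCLM (𝕜 := ℝ) B).le_opNorm _

lemma part2 (n p : ℕ) (X : Matrix (Fin n) (Fin p) ℝ) (σ τ M : ℝ)
    (hτ : 0 < τ) (hM : 0 < M) (y : Fin n → ℝ)
    (g : Measure ℝ) [IsProbabilityMeasure g] (hg : g (Set.Icc (-M) M) = 1)
    (φ φ' : Fin p → ℝ) :
    Real.sqrt (∑ j, (gradUg n p X σ τ y g φ j - gradUg n p X σ τ y g φ' j) ^ 2) ≤
      (‖Matrix.toEuclideanCLM (𝕜 := ℝ) (Xᵀ * (SigM n p X σ τ)⁻¹ * X)‖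
          + (1 + M ^ 2 / τ ^ 2) / τ ^ 2) *
        Real.sqrt (∑ j, (φ j - φ' j) ^ 2) := by
  set B := Xᵀ * (SigM n p X σ τ)⁻¹ * X with hB
  set v : Fin p → ℝ := φ - φ' with hv
  set q : Fin p → ℝ := fun j => postMean g τ (φ j) - postMean g τ (φ' j) with hq
  have hΔ : (fun j => gradUg n p X σ τ y g φ j - gradUg n p X σ τ y g φ' j)
      = (B *ᵥ v) + ((τ ^ 2)⁻¹ • v - (τ ^ 2)⁻¹ • q) := by
    funext j
    unfold gradUg
    rw [← hB]
    have h1 : (B *ᵥ v) j = (B *ᵥ φ) j - (B *ᵥ φ') j := by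
      rw [hv, Matrix.mulVec_sub]; rfl
    simp only [Pi.add_apply, Pi.sub_apply, Pi.smul_apply, smul_eq_mul, h1, hq]
    simp only [hv, Pi.sub_apply]
    field_simp
    ring
  have hsq : ∀ w : Fin p → ℝ, Real.sqrt (∑ j, w j ^ 2) = ‖euc w‖ := fun w => (euc_norm w).symm
  rw [hsq, hsq, hΔ]
  have e1 : euc ((B *ᵥ v) + ((τ ^ 2)⁻¹ • v - (τ ^ 2)⁻¹ • q))
      = euc (B *ᵥ v) + ((τ ^ 2)⁻¹ • euc v - (τ ^ 2)⁻¹ • euc q) := by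
    simp only [euc, WithLp.equiv_symm_apply, WithLp.toLp_add, WithLp.toLp_sub, WithLp.toLp_smul]
  rw [e1]
  have ht2 : (0:ℝ) < τ ^ 2 := by positivity
  have hqle : ‖euc q‖ ≤ M ^ 2 / τ ^ 2 * ‖euc v‖ := by
    rw [euc_norm, euc_norm]
    have h2 : M ^ 2 / τ ^ 2 * Real.sqrt (∑ j, v j ^ 2)
        = Real.sqrt (∑ j, (M ^ 2 / τ ^ 2 * v j) ^ 2) := by
      rw [show (∑ j, (M ^ 2 / τ ^ 2 * v j) ^ 2) = (M ^ 2 / τ ^ 2) ^ 2 * ∑ j, v j ^ 2 by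
          rw [Finset.mul_sum]; exact Finset.sum_congr rfl fun j _ => by ring,
        Real.sqrt_mul (by positivity), Real.sqrt_sq (by positivity)]
    rw [h2]
    refine sqrt_sum_sq_le _ _ fun j => ?_
    rw [abs_mul, abs_of_pos (by positivity : (0:ℝ) < M ^ 2 / τ ^ 2)]
    exact postMean_lipschitz hτ hM hg (φ j) (φ' j)
  calc ‖euc (B *ᵥ v) + ((τ ^ 2)⁻¹ • euc v - (τ ^ 2)⁻¹ • euc q)‖
      ≤ ‖euc (B *ᵥ v)‖ + ‖(τ ^ 2)⁻¹ • euc v - (τ ^ 2)⁻¹ • euc q‖ := norm_add_le _ _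
    _ ≤ ‖euc (B *ᵥ v)‖ + (‖(τ ^ 2)⁻¹ • euc v‖ + ‖(τ ^ 2)⁻¹ • euc q‖) :=
        add_le_add_right (norm_sub_le _ _) _
    _ = ‖euc (B *ᵥ v)‖ + ((τ ^ 2)⁻¹ * ‖euc v‖ + (τ ^ 2)⁻¹ * ‖euc q‖) := by
        rw [norm_smul, norm_smul, Real.norm_eq_abs, abs_of_pos (by positivity)]
    _ ≤ ‖Matrix.toEuclideanCLM (𝕜 := ℝ) B‖ * ‖euc v‖
        + ((τ ^ 2)⁻¹ * ‖euc v‖ + (τ ^ 2)⁻¹ * (M ^ 2 / τ ^ 2 * ‖euc v‖)) := by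
        exact add_le_add (mulVec_norm_le B v)
          (add_le_add_right (mul_le_mul_of_nonneg_left hqle (by positivity)) _)
    _ = (‖Matrix.toEuclideanCLM (𝕜 := ℝ) B‖ + (1 + M ^ 2 / τ ^ 2) / τ ^ 2) * ‖euc v‖ := by
        ring

theorem stmt19 (n p : ℕ) (X : Matrix (Fin n) (Fin p) ℝ) (σ τ M : ℝ)
    (hσ : 0 < σ) (hτ : 0 < τ) (hM : 0 < M)
    (hpos : (SigM n p X σ τ).PosDef) (y : Fin n → ℝ)
    (g : Measure ℝ) [IsProbabilityMeasure g] (hg : g (Set.Icc (-M) M) = 1) :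
    (∀ (φ : Fin p → ℝ) (j : Fin p),
      HasDerivAt (fun s => Ug n p X σ τ y g (Function.update φ j s))
        (gradUg n p X σ τ y g φ j) (φ j)) ∧
    (∀ φ φ' : Fin p → ℝ,
      Real.sqrt (∑ j, (gradUg n p X σ τ y g φ j - gradUg n p X σ τ y g φ' j) ^ 2) ≤
        (‖Matrix.toEuclideanCLM (𝕜 := ℝ) (Xᵀ * (SigM n p X σ τ)⁻¹ * X)‖
            + (1 + M ^ 2 / τ ^ 2) / τ ^ 2) *
          Real.sqrt (∑ j, (φ j - φ' j) ^ 2)) :=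
  ⟨fun φ j => part1 n p X σ τ M hτ hM y g hg φ j,
   fun φ φ' => part2 n p X σ τ M hτ hM y g hg φ φ'⟩
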